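/- For all permutations σ and τ of {1,…,k}, the Hamming distance between L_1 = mdolBWT(M,σ) and L_2 = mdolBWT(M,τ) satisfies Hdist(L_1,L_2) ≤ Σ_{[b,e] interesting interval of M} (e − b + 1), i.e., it is bounded by the total length of the interesting intervals of M. -/

import Mathlib

/-- The `j`-th rotation of a string. -/
def rot {β : Type*} (l : List β) (j : ℕ) : List β := l.drop j ++ l.take j

/-- Nonstrict lexicographic order on strings. -/
def listLe {β : Type*} [LT β] (X Y : List β) : Prop := X = Y ∨ List.Lex (· < ·) X Y

/-- `T·$`, over the alphabet extended with a sentinel `⊥` smaller than every symbol. -/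
def dstr {α : Type*} (T : List α) : List (WithBot α) :=
  (T.map (fun a => (a : WithBot α))) ++ [⊥]

/-- The multiset (list) of all rotations of the strings `T_i·$`. -/
def dolRots {α : Type*} {k : ℕ} (T : Fin k → List α) : List (List (WithBot α)) :=
  (List.finRange k).flatMap fun i =>
    (List.range (dstr (T i)).length).map (rot (dstr (T i)))

/-- The character preceding the suffix `U` in `Ti`: the last character of `W` where
`Ti = W·U`, and the sentinel `⊥` (i.e. `$`) if `U = Ti`. -/
def precChar {α : Type*} (Ti U : List α) : WithBot α :=
  match (Ti.take (Ti.length - U.length)).getLast? with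
  | none => ⊥
  | some a => (a : WithBot α)

/-- `U` defines an interesting interval: `U` is a suffix of two different input strings
and the characters preceding these two occurrences differ. -/
def Interesting {α : Type*} {k : ℕ} (T : Fin k → List α) (U : List α) : Prop :=
  ∃ i j : Fin k, i ≠ j ∧ U <:+ T i ∧ U <:+ T j ∧ precChar (T i) U ≠ precChar (T j) U

/-- The set of ranks, in the lexicographically sorted list `L0` of rotations of the
`T_i·$`, of the rotations beginning with `U·$`. -/
def rankSet {α : Type*} (L0 : List (List (WithBot α))) (U : List α) : Set ℕ :=
  {p | ∃ R, L0[p]? = some R ∧ dstr U <+: R}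

/-- The string `W_σ = T_{σ(1)}$_1 T_{σ(2)}$_2 ⋯ T_{σ(k)}$_k` over the alphabet
`Fin k ⊕ₗ α` (separators `toLex (Sum.inl p)` are pairwise distinct, increasing, and
smaller than every symbol of `Σ`). -/
def mWord {α : Type*} {k : ℕ} (T : Fin k → List α) (σ : Equiv.Perm (Fin k)) :
    List (Fin k ⊕ₗ α) :=
  (List.finRange k).flatMap fun p =>
    ((T (σ p)).map fun a => toLex (Sum.inr a)) ++ [toLex (Sum.inl p)]

/-- The multiset (list) of all rotations of `W_σ`. -/
def mRots {α : Type*} {k : ℕ} (T : Fin k → List α) (σ : Equiv.Perm (Fin k)) :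
    List (List (Fin k ⊕ₗ α)) :=
  (List.range (mWord T σ).length).map (rot (mWord T σ))

/-- The last character of a rotation, with every separator replaced by the single
sentinel `$` (here `⊥`). -/
def lastOut {α : Type*} {k : ℕ} (R : List (Fin k ⊕ₗ α)) : WithBot α :=
  match R.getLast? with
  | none => ⊥
  | some b => match ofLex b with
    | Sum.inl _ => ⊥
    | Sum.inr a => (a : WithBot α)

/-- The multidollar BWT read off from a lexicographically sorted list `L` of the
rotations of `W_σ`. -/
def mdolOf {α : Type*} {k : ℕ} (L : List (List (Fin k ⊕ₗ α))) : List (WithBot α) :=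
  L.map lastOut

/-- The Hamming distance of two strings of equal length: the number of positions at
which they differ. -/
def hdist {γ : Type*} [DecidableEq γ] (X Y : List γ) : ℕ :=
  ((Finset.range X.length).filter fun p => X[p]? ≠ Y[p]?).card


section Aux
open List

/-- auxiliary: stops at the first `⊥`-valued character, records the prefix plus `⊥`. -/
def truncf {β α : Type*} [LinearOrder α] (f : β → WithBot α) (R : List β) :
    List (WithBot α) :=
  (R.takeWhile (fun x => decide (f x ≠ ⊥))).map f ++ [⊥]

variable {α : Type*} [LinearOrder α]

lemma truncf_nil {β : Type*} (f : β → WithBot α) : truncf f [] = [⊥] := rfl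

lemma truncf_cons {β : Type*} (f : β → WithBot α) (x : β) (R : List β) :
    truncf f (x :: R) = if f x = ⊥ then [⊥] else f x :: truncf f R := by
  unfold truncf
  rw [takeWhile_cons]
  by_cases h : f x = ⊥ <;> simp [h]

lemma truncf_mono {β : Type*} [LinearOrder β] (f : β → WithBot α)
    (hf : ∀ x y : β, x < y → f x = ⊥ ∨ f x < f y) :
    ∀ {R R' : List β}, List.Lex (· < ·) R R' → listLe (truncf f R) (truncf f R') := by
  intro R R' h
  induction h with
  | nil =>
      rename_i b l
      rw [truncf_nil, truncf_cons]
      by_cases hb : f b = ⊥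
      · simp only [hb, if_pos rfl]; exact Or.inl rfl
      · simp only [hb, if_neg hb]
        exact Or.inr (List.Lex.rel (Ne.bot_lt hb))
  | cons h ih =>
      rename_i a l₁ l₂
      rw [truncf_cons, truncf_cons]
      by_cases ha : f a = ⊥
      · simp only [if_pos ha]; exact Or.inl rfl
      · simp only [if_neg ha]
        rcases ih with he | hl
        · exact Or.inl (by rw [he])
        · exact Or.inr (List.Lex.cons hl)
  | rel hab =>
      rename_i a l₁ b l₂
      rw [truncf_cons, truncf_cons]
      by_cases ha : f a = ⊥
      · simp only [if_pos ha]
        by_cases hb : f b = ⊥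
        · simp only [if_pos hb]; exact Or.inl rfl
        · simp only [if_neg hb]
          exact Or.inr (List.Lex.rel (Ne.bot_lt hb))
      · rcases hf a b hab with h' | h'
        · exact absurd h' ha
        · have hb : f b ≠ ⊥ := by
            intro hbb
            rw [hbb] at h'
            exact absurd h' (not_lt_bot)
          simp only [if_neg ha, if_neg hb]
          exact Or.inr (List.Lex.rel h')

lemma listLe_mono_of_lt {β : Type*} [LinearOrder β] (f : β → WithBot α)
    (hf : ∀ x y : β, x < y → f x = ⊥ ∨ f x < f y)
    {R R' : List β} (h : listLe R R') : listLe (truncf f R) (truncf f R') := by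
  rcases h with rfl | h
  · exact Or.inl rfl
  · exact truncf_mono f hf h

lemma sorted_map_truncf {β : Type*} [LinearOrder β] (f : β → WithBot α)
    (hf : ∀ x y : β, x < y → f x = ⊥ ∨ f x < f y)
    {L : List (List β)} (hs : L.Pairwise listLe) : (L.map (truncf f)).Pairwise listLe :=
  List.Pairwise.map _ (fun _ _ h => listLe_mono_of_lt f hf h) hs

lemma listLe_antisymm {β : Type*} [LinearOrder β] :
    ∀ {X Y : List β}, listLe X Y → listLe Y X → X = Y := by
  intro X Y h1 h2
  rcases h1 with rfl | h1
  · rfl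
  rcases h2 with rfl | h2
  · rfl
  exact absurd h2 (asymm h1)

lemma takeWhile_middle {β : Type*} (p : β → Bool) (X : List β) (y : β) (Z : List β)
    (hX : ∀ x ∈ X, p x = true) (hy : p y = false) :
    (X ++ y :: Z).takeWhile p = X := by
  induction X with
  | nil => simp [takeWhile_cons, hy]
  | cons a X ih =>
      simp only [cons_append, takeWhile_cons, hX a mem_cons_self, if_pos rfl, if_true]
      rw [ih fun x hx => hX x (mem_cons_of_mem _ hx)]

end Aux
section Aux2
open List

variable {α : Type*} [LinearOrder α] {k : ℕ}

omit [LinearOrder α] in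
lemma dstr_eq (U : List α) : dstr U = U.map WithBot.some ++ [⊥] := by
  unfold dstr
  congr 1
  induction U with
  | nil => rfl
  | cons a U ih => simpa using ih

omit [LinearOrder α] in
lemma dstr_inj {U V : List α} (h : dstr U = dstr V) : U = V := by
  rw [dstr_eq, dstr_eq, List.append_left_inj] at h
  exact List.map_injective_iff.mpr (fun a b hab => by
    simpa using hab) h

omit [LinearOrder α] in
lemma length_dstr (U : List α) : (dstr U).length = U.length + 1 := by simp [dstr_eq]

omit [LinearOrder α] in
lemma rot_dstr (Ti : List α) {j : ℕ} (hj : j ≤ Ti.length) :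
    rot (dstr Ti) j =
      ((Ti.drop j).map WithBot.some) ++ (⊥ : WithBot α) :: ((Ti.take j).map WithBot.some) := by
  unfold rot
  rw [dstr_eq,
      List.drop_append_of_le_length (by simpa using hj),
      List.take_append_of_le_length (by simpa using hj),
      List.map_drop, List.map_take]
  simp [List.append_assoc]

lemma truncf_id_dstr (U : List α) (Z : List (WithBot α)) :
    truncf id ((U.map WithBot.some) ++ (⊥ : WithBot α) :: Z) = dstr U := by
  unfold truncf
  rw [takeWhile_middle _ _ _ _ (by
        intro x hx
        simp only [List.mem_map] at hx
        obtain ⟨a, _, rfl⟩ := hx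
        simp) (by simp)]
  simp [dstr_eq]

/-- projection of a mixed character to `WithBot α`: separators go to `⊥`. -/
def toBot (x : Fin k ⊕ₗ α) : WithBot α :=
  match ofLex x with
  | Sum.inl _ => (⊥ : WithBot α)
  | Sum.inr a => (a : WithBot α)

@[simp] lemma toBot_inl (p : Fin k) : toBot (α := α) (toLex (Sum.inl p)) = ⊥ := rfl
@[simp] lemma toBot_inr (a : α) : toBot (k := k) (toLex (Sum.inr a)) = (a : WithBot α) := rfl

lemma toBot_hf : ∀ x y : Fin k ⊕ₗ α, x < y → toBot x = ⊥ ∨ toBot x < toBot y := by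
  intro x y hxy
  rcases hx : ofLex x with p | a
  · left
    have : x = toLex (Sum.inl p) := by simpa using congrArg toLex hx
    rw [this]; simp
  · rcases hy : ofLex y with q | b
    · exfalso
      have hx' : x = toLex (Sum.inr a) := by simpa using congrArg toLex hx
      have hy' : y = toLex (Sum.inl q) := by simpa using congrArg toLex hy
      rw [hx', hy'] at hxy
      exact Sum.Lex.not_inr_lt_inl hxy
    · right
      have hx' : x = toLex (Sum.inr a) := by simpa using congrArg toLex hx
      have hy' : y = toLex (Sum.inr b) := by simpa using congrArg toLex hy
      rw [hx', hy'] at hxy ⊢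
      have : a < b := Sum.Lex.inr_lt_inr_iff.mp hxy
      simp only [toBot_inl, toBot_inr]
      exact_mod_cast this

lemma truncf_toBot_dstr (U : List α) (p : Fin k) (Z : List (Fin k ⊕ₗ α)) :
    truncf toBot ((U.map fun a => toLex (Sum.inr a)) ++ toLex (Sum.inl p) :: Z) = dstr U := by
  unfold truncf
  rw [takeWhile_middle _ _ _ _ (by
        intro x hx
        simp only [List.mem_map] at hx
        obtain ⟨a, _, rfl⟩ := hx
        simp) (by simp)]
  simp [dstr_eq, List.map_map, Function.comp]

lemma id_hf : ∀ x y : WithBot α, x < y → (id x : WithBot α) = ⊥ ∨ id x < id y := by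
  intro x y h; exact Or.inr h

end Aux2
section Aux3
open List

variable {γ : Type*}

lemma range_flatten : ∀ (Bs : List (List γ)),
    List.range Bs.flatten.length =
      (List.range Bs.length).flatMap fun p =>
        (List.range (Bs.getD p []).length).map ((Bs.take p).flatten.length + ·)
  | [] => by simp
  | B :: Bs => by
      rw [flatten_cons, length_append, List.range_add, range_flatten Bs,
          length_cons, range_succ_eq_map, flatMap_cons, map_flatMap]
      congr 1
      · simp
      · rw [flatMap_map]
        congr 1
        funext p
        rw [map_map]
        congr 1
        funext j
        simp [Nat.add_assoc]

lemma rot_flatten (Bs : List (List γ)) (p : ℕ) (hp : p < Bs.length) {j : ℕ}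
    (hj : j ≤ (Bs.getD p []).length) :
    rot Bs.flatten ((Bs.take p).flatten.length + j) =
      (Bs.getD p []).drop j ++ (Bs.drop (p+1)).flatten ++
        ((Bs.take p).flatten ++ (Bs.getD p []).take j) := by
  have hgd : Bs.getD p [] = Bs[p] := List.getD_eq_getElem Bs [] hp
  have hdec : Bs.flatten = (Bs.take p).flatten ++ (Bs.getD p [] ++ (Bs.drop (p+1)).flatten) := by
    conv_lhs => rw [← List.take_append_drop p Bs]
    rw [flatten_append, List.drop_eq_getElem_cons hp, flatten_cons, hgd]
  unfold rot
  rw [hdec, List.drop_length_add_append, List.take_length_add_append]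
  rw [List.drop_append_of_le_length hj, List.take_append_of_le_length hj]

end Aux3
section Aux4
open List

variable {α : Type*} [LinearOrder α] {k : ℕ}

/-- the `p`-th block of `W_σ`. -/
def blk (T : Fin k → List α) (σ : Equiv.Perm (Fin k)) (p : Fin k) : List (Fin k ⊕ₗ α) :=
  ((T (σ p)).map fun a => toLex (Sum.inr a)) ++ [toLex (Sum.inl p)]

def blocks (T : Fin k → List α) (σ : Equiv.Perm (Fin k)) : List (List (Fin k ⊕ₗ α)) :=
  (List.finRange k).map (blk T σ)

lemma mWord_eq (T : Fin k → List α) (σ : Equiv.Perm (Fin k)) :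
    mWord T σ = (blocks T σ).flatten := by
  rw [mWord, blocks, flatMap_def]
  rfl

@[simp] lemma length_blocks (T : Fin k → List α) (σ : Equiv.Perm (Fin k)) :
    (blocks T σ).length = k := by simp [blocks]

lemma getD_blocks (T : Fin k → List α) (σ : Equiv.Perm (Fin k)) (p : Fin k) :
    (blocks T σ).getD p.val [] = blk T σ p := by
  rw [List.getD_eq_getElem _ [] (by simp [p.isLt])]
  simp [blocks]

@[simp] lemma length_blk (T : Fin k → List α) (σ : Equiv.Perm (Fin k)) (p : Fin k) :
    (blk T σ p).length = (T (σ p)).length + 1 := by simp [blk]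

/-- ends with a separator -/
def endsSep (l : List (Fin k ⊕ₗ α)) : Prop :=
  ∃ p : Fin k, l.getLast? = some (toLex (Sum.inl p))

lemma endsSep_blk (T : Fin k → List α) (σ : Equiv.Perm (Fin k)) (p : Fin k) :
    endsSep (blk T σ p) := ⟨p, List.getLast?_concat⟩

lemma endsSep_ne_nil {l : List (Fin k ⊕ₗ α)} (h : endsSep l) : l ≠ [] := by
  rcases h with ⟨p, hp⟩
  intro e
  rw [e] at hp
  simp at hp

lemma endsSep_append {l l' : List (Fin k ⊕ₗ α)} (h : endsSep l') : endsSep (l ++ l') := by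
  rcases h with ⟨p, hp⟩
  exact ⟨p, by rw [List.getLast?_append, hp]; rfl⟩

lemma endsSep_flatten {Bs : List (List (Fin k ⊕ₗ α))} (hB : ∀ B ∈ Bs, endsSep B)
    (hne : Bs ≠ []) : endsSep Bs.flatten := by
  induction Bs with
  | nil => exact absurd rfl hne
  | cons B Bs ih =>
      rw [flatten_cons]
      rcases eq_or_ne Bs [] with rfl | h
      · simpa using hB B List.mem_cons_self
      · exact endsSep_append (ih (fun C hC => hB C (List.mem_cons_of_mem _ hC)) h)

lemma lastOut_append_endsSep {X l' : List (Fin k ⊕ₗ α)} (h : endsSep l') :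
    lastOut (X ++ l') = ⊥ := by
  rcases h with ⟨p, hp⟩
  have : (X ++ l').getLast? = some (toLex (Sum.inl p)) := by
    rw [List.getLast?_append, hp]; rfl
  simp [lastOut, this]

lemma lastOut_append_inr {X : List (Fin k ⊕ₗ α)} {Y : List α} (h : Y ≠ []) (a : α)
    (ha : Y.getLast? = some a) :
    lastOut (X ++ Y.map (fun a => toLex (Sum.inr a))) = (a : WithBot α) := by
  have hY : (Y.map (fun a => toLex (Sum.inr a : Fin k ⊕ α))).getLast?
      = some (toLex (Sum.inr a)) := by
    rw [List.getLast?_map, ha]; rfl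
  have : (X ++ Y.map (fun a => toLex (Sum.inr a : Fin k ⊕ α))).getLast?
      = some (toLex (Sum.inr a)) := by
    rw [List.getLast?_append, hY]; rfl
  simp [lastOut, this]

end Aux4
section Aux5
open List

variable {α : Type*} [LinearOrder α] {k : ℕ}

omit [LinearOrder α] in
lemma precChar_of_none {Ti U : List α}
    (h : (Ti.take (Ti.length - U.length)).getLast? = none) : precChar Ti U = ⊥ := by
  simp [precChar, h]

omit [LinearOrder α] in
lemma precChar_of_some {Ti U : List α} {a : α}
    (h : (Ti.take (Ti.length - U.length)).getLast? = some a) :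
    precChar Ti U = (a : WithBot α) := by
  simp [precChar, h]

lemma mRot_spec (T : Fin k → List α) (σ : Equiv.Perm (Fin k)) (hk : 2 ≤ k) (p : Fin k)
    {j : ℕ} (hj : j ≤ (T (σ p)).length) :
    truncf toBot (rot (mWord T σ) (((blocks T σ).take p.val).flatten.length + j))
        = dstr ((T (σ p)).drop j) ∧
    lastOut (rot (mWord T σ) (((blocks T σ).take p.val).flatten.length + j))
        = precChar (T (σ p)) ((T (σ p)).drop j) := by
  have hp : p.val < (blocks T σ).length := by simp [p.isLt]
  have hgd := getD_blocks T σ p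
  have hj' : j ≤ ((blocks T σ).getD p.val []).length := by
    rw [hgd, length_blk]; omega
  have hrot := rot_flatten (blocks T σ) p.val hp hj'
  rw [← mWord_eq, hgd] at hrot
  have hdrop : (blk T σ p).drop j
      = (((T (σ p)).drop j).map fun a => toLex (Sum.inr a)) ++ [toLex (Sum.inl p)] := by
    rw [blk, List.drop_append_of_le_length (by simpa using hj), ← List.map_drop]
  have htake : (blk T σ p).take j = ((T (σ p)).take j).map fun a => toLex (Sum.inr a) := by
    rw [blk, List.take_append_of_le_length (by simpa using hj), ← List.map_take]
  have hmem_blocks : ∀ B ∈ blocks T σ, endsSep B := by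
    intro B hB
    obtain ⟨q, _, rfl⟩ := List.mem_map.mp hB
    exact endsSep_blk T σ q
  constructor
  · rw [hrot, hdrop]
    simp only [List.append_assoc, List.singleton_append]
    exact truncf_toBot_dstr _ p _
  · rcases Nat.eq_zero_or_pos j with rfl | hjpos
    · -- j = 0
      have hrhs : precChar (T (σ p)) ((T (σ p)).drop 0) = ⊥ := by
        apply precChar_of_none
        simp
      rw [hrhs, hrot]
      simp only [List.drop_zero, List.take_zero, List.append_nil]
      by_cases hp0 : p.val = 0
      · have hA : ((blocks T σ).take p.val).flatten = [] := by
          rw [hp0]; simp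
        rw [hA, List.append_nil]
        apply lastOut_append_endsSep (X := blk T σ p)
        apply endsSep_flatten
        · intro B hB
          exact hmem_blocks B (List.mem_of_mem_drop hB)
        · intro h
          have : ((blocks T σ).drop (p.val + 1)).length = 0 := by rw [h]; rfl
          rw [List.length_drop, length_blocks] at this
          omega
      · apply lastOut_append_endsSep (X := blk T σ p ++ ((blocks T σ).drop (p.val + 1)).flatten)
        apply endsSep_flatten
        · intro B hB
          exact hmem_blocks B (List.mem_of_mem_take hB)
        · intro h
          have : ((blocks T σ).take p.val).length = 0 := by rw [h]; rfl
          rw [List.length_take, length_blocks] at this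
          have := p.isLt
          omega
    · -- j > 0
      have hne : (T (σ p)).take j ≠ [] := by
        apply List.ne_nil_of_length_pos
        rw [List.length_take]
        omega
      have hlast := List.getLast?_eq_getLast hne
      have hrhs : precChar (T (σ p)) ((T (σ p)).drop j)
          = ((T (σ p)).take j).getLast hne := by
        apply precChar_of_some
        have harith : (T (σ p)).length - ((T (σ p)).drop j).length = j := by
          rw [List.length_drop]
          omega
        rw [harith]
        exact hlast
      rw [hrhs, hrot, htake, ← List.append_assoc]
      exact lastOut_append_inr hne _ hlast

end Aux5
section Aux6
open List

variable {α : Type*} [LinearOrder α] {k : ℕ}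

def canonT (T : Fin k → List α) : List (List (WithBot α)) :=
  (List.finRange k).flatMap fun i =>
    (List.range ((T i).length + 1)).map fun j => dstr ((T i).drop j)

lemma map_truncf_dolRots (T : Fin k → List α) :
    (dolRots T).map (truncf id) = canonT T := by
  rw [dolRots, map_flatMap, canonT]
  congr 1
  funext i
  rw [map_map, length_dstr]
  apply map_congr_left
  intro j hj
  rw [mem_range] at hj
  have hj' : j ≤ (T i).length := by omega
  show truncf id (rot (dstr (T i)) j) = dstr ((T i).drop j)
  rw [rot_dstr _ hj']
  exact truncf_id_dstr _ _

lemma dolRots_trunc_prefix (T : Fin k → List α) {R : List (WithBot α)}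
    (h : R ∈ dolRots T) : truncf id R <+: R := by
  rw [dolRots, mem_flatMap] at h
  obtain ⟨i, _, hR⟩ := h
  rw [mem_map] at hR
  obtain ⟨j, hj, rfl⟩ := hR
  rw [mem_range, length_dstr] at hj
  have hj' : j ≤ (T i).length := by omega
  rw [rot_dstr _ hj', truncf_id_dstr, dstr_eq]
  have : ((T i).drop j).map (WithBot.some) ++ (⊥ : WithBot α) :: ((T i).take j).map WithBot.some
      = (((T i).drop j).map WithBot.some ++ [⊥]) ++ ((T i).take j).map WithBot.some := by
    simp
  rw [this]
  exact List.prefix_append _ _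

lemma map_truncf_mRots (T : Fin k → List α) (σ : Equiv.Perm (Fin k)) (hk : 2 ≤ k) :
    ((mRots T σ).map (truncf toBot)).Perm (canonT T) := by
  have h1 : (mRots T σ).map (truncf toBot)
      = (List.finRange k).flatMap fun p =>
          (List.range ((T (σ p)).length + 1)).map fun j => dstr ((T (σ p)).drop j) := by
    rw [mRots, map_map, mWord_eq, range_flatten, map_flatMap, length_blocks,
        ← List.map_coe_finRange_eq_range, flatMap_map]
    congr 1
    funext p
    rw [getD_blocks, length_blk, map_map]
    apply map_congr_left
    intro j hj
    rw [mem_range] at hj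
    have hj' : j ≤ (T (σ p)).length := by omega
    have hspec := (mRot_spec T σ hk p hj').1
    rw [mWord_eq] at hspec
    exact hspec
  rw [h1]
  have h2 : (List.finRange k).flatMap
        (fun p => (List.range ((T (σ p)).length + 1)).map fun j => dstr ((T (σ p)).drop j))
      = ((List.finRange k).map σ).flatMap
        (fun i => (List.range ((T i).length + 1)).map fun j => dstr ((T i).drop j)) := by
    rw [flatMap_map]
  rw [h2, canonT]
  exact List.Perm.flatMap_right _ (Equiv.Perm.map_finRange_perm σ)

lemma mem_mRots_spec (T : Fin k → List α) (σ : Equiv.Perm (Fin k)) (hk : 2 ≤ k)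
    {R : List (Fin k ⊕ₗ α)} (h : R ∈ mRots T σ) :
    ∃ (i : Fin k) (U : List α), U <:+ T i ∧ truncf toBot R = dstr U ∧
      lastOut R = precChar (T i) U := by
  rw [mRots, mem_map] at h
  obtain ⟨q, hq, rfl⟩ := h
  rw [mWord_eq, range_flatten, mem_flatMap] at hq
  obtain ⟨p, hp, hq⟩ := hq
  rw [mem_range, length_blocks] at hp
  rw [mem_map] at hq
  obtain ⟨j, hj, rfl⟩ := hq
  have hgd : (blocks T σ).getD p [] = blk T σ ⟨p, hp⟩ := getD_blocks T σ ⟨p, hp⟩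
  rw [mem_range, hgd, length_blk] at hj
  have hj' : j ≤ (T (σ ⟨p, hp⟩)).length := by omega
  refine ⟨σ ⟨p, hp⟩, (T (σ ⟨p, hp⟩)).drop j, List.drop_suffix _ _, ?_, ?_⟩
  · exact (mRot_spec T σ hk ⟨p, hp⟩ hj').1
  · exact (mRot_spec T σ hk ⟨p, hp⟩ hj').2

end Aux6
/-- The Hamming distance between `mdolBWT(M,σ)` and `mdolBWT(M,τ)` is at
most the total length `Σ (e − b + 1)` of the interesting intervals of `M`.  Here `𝒰`
is the (finite) set of shared suffixes defining interesting intervals, and for each of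
them `b U`, `e U` are the least resp. greatest ranks of rotations beginning with
`U·$` in the sorted rotation list `L0` of the `T_i·$`. -/
theorem mdolBWT_hamming_le_interesting_length {α : Type*} [LinearOrder α]
    (k : ℕ) (hk : 2 ≤ k) (T : Fin k → List α) (hT : ∀ i, T i ≠ [])
    (σ τ : Equiv.Perm (Fin k))
    (L0 : List (List (WithBot α))) (hperm0 : L0.Perm (dolRots T))
    (hsort0 : L0.Pairwise listLe)
    (L1 L2 : List (List (Fin k ⊕ₗ α)))
    (hperm1 : L1.Perm (mRots T σ)) (hsort1 : L1.Pairwise listLe)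
    (hperm2 : L2.Perm (mRots T τ)) (hsort2 : L2.Pairwise listLe)
    (𝒰 : Finset (List α)) (h𝒰 : ∀ U, U ∈ 𝒰 ↔ Interesting T U)
    (b e : List α → ℕ)
    (hb : ∀ U ∈ 𝒰, IsLeast (rankSet L0 U) (b U))
    (he : ∀ U ∈ 𝒰, IsGreatest (rankSet L0 U) (e U)) :
    hdist (mdolOf L1) (mdolOf L2) ≤ ∑ U ∈ 𝒰, (e U - b U + 1) := by
  haveI : IsAntisymm (List (WithBot α)) listLe := ⟨fun _ _ h1 h2 => listLe_antisymm h1 h2⟩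
  have hsorted0 : ((L0.map (truncf id))).Pairwise listLe := sorted_map_truncf _ id_hf hsort0
  have hsorted1 : ((L1.map (truncf toBot))).Pairwise listLe := sorted_map_truncf _ toBot_hf hsort1
  have hsorted2 : ((L2.map (truncf toBot))).Pairwise listLe := sorted_map_truncf _ toBot_hf hsort2
  have h3 : (canonT T).Perm (L0.map (truncf id)) := by
    rw [← map_truncf_dolRots T]
    exact (hperm0.map _).symm
  have hperm1' : (L1.map (truncf toBot)).Perm (L0.map (truncf id)) :=
    (hperm1.map _).trans ((map_truncf_mRots T σ hk).trans h3)
  have hperm2' : (L2.map (truncf toBot)).Perm (L0.map (truncf id)) :=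
    (hperm2.map _).trans ((map_truncf_mRots T τ hk).trans h3)
  have hEq1 : L1.map (truncf toBot) = L0.map (truncf id) :=
    List.Perm.eq_of_pairwise' hsorted1 hsorted0 hperm1'
  have hEq2 : L2.map (truncf toBot) = L0.map (truncf id) :=
    List.Perm.eq_of_pairwise' hsorted2 hsorted0 hperm2'
  have hlen10 : L1.length = L0.length := by
    have := congrArg List.length hEq1; simpa using this
  have hlen20 : L2.length = L0.length := by
    have := congrArg List.length hEq2; simpa using this
  have key : ∀ r, r < (mdolOf L1).length → (mdolOf L1)[r]? ≠ (mdolOf L2)[r]? →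
      ∃ U ∈ 𝒰, r ∈ Finset.Icc (b U) (e U) := by
    intro r hrlen hne
    have hr1 : r < L1.length := by simpa [mdolOf] using hrlen
    have hr0 : r < L0.length := hlen10 ▸ hr1
    have hr2 : r < L2.length := by rw [hlen20]; exact hr0
    have hne' : lastOut L1[r] ≠ lastOut L2[r] := by
      intro hEq
      apply hne
      rw [mdolOf, mdolOf, List.getElem?_map, List.getElem?_map,
        List.getElem?_eq_getElem hr1, List.getElem?_eq_getElem hr2]
      simp [hEq]
    obtain ⟨i, U, hUi, ht1, hl1⟩ :=
      mem_mRots_spec T σ hk (hperm1.subset (List.getElem_mem hr1))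
    obtain ⟨i', U', hUi', ht2, hl2⟩ :=
      mem_mRots_spec T τ hk (hperm2.subset (List.getElem_mem hr2))
    have e1 : truncf toBot L1[r] = truncf id L0[r] := by
      have h := congrArg (fun l => l[r]?) hEq1
      simp only [List.getElem?_map, List.getElem?_eq_getElem hr1,
        List.getElem?_eq_getElem hr0, Option.map_some] at h
      exact Option.some.inj h
    have e2 : truncf toBot L2[r] = truncf id L0[r] := by
      have h := congrArg (fun l => l[r]?) hEq2
      simp only [List.getElem?_map, List.getElem?_eq_getElem hr2,
        List.getElem?_eq_getElem hr0, Option.map_some] at h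
      exact Option.some.inj h
    have hUU' : U = U' := dstr_inj (by rw [← ht1, ← ht2, e1, e2])
    subst hUU'
    have hii' : i ≠ i' := by
      intro h
      apply hne'
      rw [hl1, hl2, h]
    have hU : U ∈ 𝒰 :=
      (h𝒰 U).2 ⟨i, i', hii', hUi, hUi', by rw [← hl1, ← hl2]; exact hne'⟩
    have hrank : r ∈ rankSet L0 U := by
      refine ⟨L0[r], List.getElem?_eq_getElem hr0, ?_⟩
      have hpre := dolRots_trunc_prefix T (hperm0.subset (List.getElem_mem hr0))
      rw [← e1, ht1] at hpre
      exact hpre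
    exact ⟨U, hU, Finset.mem_Icc.mpr ⟨(hb U hU).2 hrank, (he U hU).2 hrank⟩⟩
  unfold hdist
  calc ((Finset.range (mdolOf L1).length).filter
        fun p => (mdolOf L1)[p]? ≠ (mdolOf L2)[p]?).card
      ≤ (𝒰.biUnion fun U => Finset.Icc (b U) (e U)).card := by
        apply Finset.card_le_card
        intro r hr
        rw [Finset.mem_filter, Finset.mem_range] at hr
        rw [Finset.mem_biUnion]
        exact key r hr.1 hr.2
    _ ≤ ∑ U ∈ 𝒰, (Finset.Icc (b U) (e U)).card := Finset.card_biUnion_le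
    _ = ∑ U ∈ 𝒰, (e U - b U + 1) := by
        apply Finset.sum_congr rfl
        intro U hU
        rw [Nat.card_Icc]
        have hbe : b U ≤ e U := (he U hU).2 (hb U hU).1
        omega
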